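/- arXiv:1505.00160 — 5 statements merged into one kernel-verified Lean document; each statement's English description precedes it below -/
import Mathlib

section
/- Let X and Xα be real Banach spaces, C > 0, and ι : Xα → X an injective continuous linear map with ‖ι z‖_X ≤ C ‖z‖_{Xα} for all z ∈ Xα. Let α ∈ (0,1) and M, c, m₀, B > 0, and suppose Sα(t) : X → Xα, for t > 0, is a family of linear maps satisfying ‖Sα(t) x‖_{Xα} ≤ M e^{−c t} t^{−α} ‖x‖_X for all t > 0 and x ∈ X. Let g : ℝ → X be strongly measurable with ‖g(τ)‖_X ≤ m₀ for all τ ∈ ℝ, and let u : ℝ → Xα satisfy ‖u(t)‖_{Xα} ≤ B for all t ≤ 0 and, for all t' < t, the integral identity u(t) = Sα(t−t')(ι(u(t'))) + ∫_{t'}^{t} Sα(t−τ)(g(τ)) dτ, where the Bochner integral on the right is assumed to exist in Xα. Then ‖u(t)‖_{Xα} ≤ m₀ M (e^{−c}/c + 1/(1−α)) for every t ∈ ℝ. -/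
open MeasureTheory intervalIntegral

lemma phi_intble (M c α : ℝ) (hα : α < 1) (a b : ℝ) :
    IntervalIntegrable (fun s : ℝ => M * Real.exp (-c * s) * s ^ (-α)) volume a b := by
  have h : IntervalIntegrable (fun s : ℝ => s ^ (-α)) volume a b :=
    intervalIntegrable_rpow' (by linarith)
  exact h.continuousOn_mul (by fun_prop)

/-- Abstract form of inequality (fs9) from the proof of Lemma 3.3: a full solution
of the variation-of-constants formula in the "positive" spectral part, bounded
on `(-∞, 0]`, satisfies the uniform bound `‖u(t)‖ ≤ m₀ M (e^{−c}/c + 1/(1−α))`. -/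
theorem stmt_2
    {Xa X : Type*} [NormedAddCommGroup Xa] [NormedSpace ℝ Xa] [CompleteSpace Xa]
    [NormedAddCommGroup X] [NormedSpace ℝ X] [CompleteSpace X]
    (C : ℝ) (hC : 0 < C) (ι : Xa →L[ℝ] X) (hι : Function.Injective ι)
    (hιnorm : ∀ z : Xa, ‖ι z‖ ≤ C * ‖z‖)
    (α M c m₀ B : ℝ) (hα : α ∈ Set.Ioo (0 : ℝ) 1) (hM : 0 < M) (hc : 0 < c)
    (hm₀ : 0 < m₀) (hB : 0 < B)
    (Sα : ℝ → (X →ₗ[ℝ] Xa))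
    (hS : ∀ t : ℝ, 0 < t → ∀ x : X,
      ‖Sα t x‖ ≤ M * Real.exp (-c * t) * t ^ (-α) * ‖x‖)
    (g : ℝ → X) (hg : StronglyMeasurable g) (hgb : ∀ τ : ℝ, ‖g τ‖ ≤ m₀)
    (u : ℝ → Xa) (hub : ∀ t : ℝ, t ≤ 0 → ‖u t‖ ≤ B)
    (hint : ∀ t' t : ℝ, t' < t →
      IntervalIntegrable (fun τ => Sα (t - τ) (g τ)) volume t' t)
    (hu : ∀ t' t : ℝ, t' < t →
      u t = Sα (t - t') (ι (u t')) + ∫ τ in t'..t, Sα (t - τ) (g τ)) :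
    ∀ t : ℝ, ‖u t‖ ≤ m₀ * M * (Real.exp (-c) / c + 1 / (1 - α)) := by
  obtain ⟨hα0, hα1⟩ := hα
  have h1α : (0:ℝ) < 1 - α := by linarith
  set K : ℝ := Real.exp (-c) / c + 1 / (1 - α) with hKdef
  set φ : ℝ → ℝ := fun s => M * Real.exp (-c * s) * s ^ (-α) with hφ
  -- estimate of ∫_0^T φ
  have hφint : ∀ a b : ℝ, IntervalIntegrable φ volume a b := phi_intble M c α hα1
  have hφest : ∀ T : ℝ, 1 ≤ T → (∫ s in (0:ℝ)..T, φ s) ≤ M * K := by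
    intro T hT
    have hsplit : (∫ s in (0:ℝ)..T, φ s)
        = (∫ s in (0:ℝ)..1, φ s) + ∫ s in (1:ℝ)..T, φ s :=
      (integral_add_adjacent_intervals (hφint 0 1) (hφint 1 T)).symm
    have h01 : (∫ s in (0:ℝ)..1, φ s) ≤ M * (1 / (1 - α)) := by
      have hmono : (∫ s in (0:ℝ)..1, φ s) ≤ ∫ s in (0:ℝ)..1, M * s ^ (-α) := by
        refine integral_mono_on zero_le_one (hφint 0 1)
          (((intervalIntegrable_rpow' (r := -α) (by linarith)).const_mul M)) ?_
        intro s hs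
        have h1 : Real.exp (-c * s) ≤ 1 := by
          rw [Real.exp_le_one_iff]
          nlinarith [hs.1]
        have h2 : (0:ℝ) ≤ s ^ (-α) := by
          rcases eq_or_lt_of_le hs.1 with h | h
          · simp [← h, Real.zero_rpow (by linarith : -α ≠ 0)]
          · exact (Real.rpow_pos_of_pos h _).le
        simp only [hφ]
        nlinarith [mul_nonneg hM.le h2]
      have hcalc : (∫ s in (0:ℝ)..1, M * s ^ (-α)) = M * (1 / (1 - α)) := by
        rw [intervalIntegral.integral_const_mul, integral_rpow (Or.inl (by linarith))]
        rw [Real.one_rpow, Real.zero_rpow (by linarith : -α + 1 ≠ 0)]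
        ring_nf
      linarith [hmono, hcalc.le, hcalc.ge]
    have h1T : (∫ s in (1:ℝ)..T, φ s) ≤ M * (Real.exp (-c) / c) := by
      have hmono : (∫ s in (1:ℝ)..T, φ s) ≤ ∫ s in (1:ℝ)..T, M * Real.exp (-c * s) := by
        refine integral_mono_on hT (hφint 1 T)
          ((Continuous.intervalIntegrable (by fun_prop) 1 T)) ?_
        intro s hs
        have hs1 : (1:ℝ) ≤ s := hs.1
        have h2 : s ^ (-α) ≤ 1 :=
          Real.rpow_le_one_of_one_le_of_nonpos hs1 (by linarith)
        have h3 : (0:ℝ) < Real.exp (-c * s) := Real.exp_pos _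
        simp only [hφ]
        nlinarith [mul_pos hM h3]
      have hderiv : ∀ x ∈ Set.uIcc (1:ℝ) T,
          HasDerivAt (fun s => -(M / c) * Real.exp (-c * s)) (M * Real.exp (-c * x)) x := by
        intro x _
        have h : HasDerivAt (fun s => -(M / c) * Real.exp (-c * s)) (-(M / c) * (Real.exp (-c * x) * (-c * 1))) x := ((hasDerivAt_id x).const_mul (-c)).exp.const_mul (-(M / c))
        convert h using 1
        field_simp [hc.ne']
      have hcalc : (∫ s in (1:ℝ)..T, M * Real.exp (-c * s))
          = -(M / c) * Real.exp (-c * T) - -(M / c) * Real.exp (-c * 1) := by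
        exact integral_eq_sub_of_hasDerivAt hderiv
          (Continuous.intervalIntegrable (by fun_prop) 1 T)
      rw [hcalc] at hmono
      have hE : (0:ℝ) < Real.exp (-c * T) := Real.exp_pos _
      have : -(M / c) * Real.exp (-c * T) - -(M / c) * Real.exp (-c * 1)
          ≤ M * (Real.exp (-c) / c) := by
        rw [show (-c * 1 : ℝ) = -c by ring]
        have heq : M * (Real.exp (-c) / c)
            - (-(M / c) * Real.exp (-c * T) - -(M / c) * Real.exp (-c))
            = (M / c) * Real.exp (-c * T) := by field_simp; ring
        linarith [mul_pos (div_pos hM hc) hE, heq]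
      linarith
    rw [hsplit, hKdef]
    linarith
  intro t
  -- the key estimate for large T
  have key : ∀ T : ℝ, 1 ≤ T → t ≤ T →
      ‖u t‖ ≤ M * C * B * Real.exp (-c * T) + m₀ * M * K := by
    intro T hT1 hTt
    have hT0 : (0:ℝ) < T := lt_of_lt_of_le one_pos hT1
    set t' : ℝ := t - T with ht'
    have htt' : t' < t := by simp only [ht']; linarith
    have ht'0 : t' ≤ 0 := by simp only [ht']; linarith
    have heq := hu t' t htt'
    have hTeq : t - t' = T := by simp [ht']
    -- first term
    have term1 : ‖Sα (t - t') (ι (u t'))‖ ≤ M * C * B * Real.exp (-c * T) := by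
      rw [hTeq]
      have h1 := hS T hT0 (ι (u t'))
      have h2 : ‖ι (u t')‖ ≤ C * B :=
        (hιnorm _).trans (by nlinarith [hub t' ht'0, norm_nonneg (u t')])
      have h3 : T ^ (-α) ≤ 1 :=
        Real.rpow_le_one_of_one_le_of_nonpos hT1 (by linarith)
      have h4 : (0:ℝ) ≤ T ^ (-α) := (Real.rpow_pos_of_pos hT0 _).le
      have hE : (0:ℝ) < Real.exp (-c * T) := Real.exp_pos _
      calc ‖Sα T (ι (u t'))‖ ≤ M * Real.exp (-c * T) * T ^ (-α) * ‖ι (u t')‖ := h1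
        _ ≤ M * Real.exp (-c * T) * 1 * (C * B) := by
            gcongr
        _ = M * C * B * Real.exp (-c * T) := by ring
    -- second term
    have hbd : ∀ᵐ τ ∂(volume.restrict (Set.Icc t' t)),
        ‖Sα (t - τ) (g τ)‖ ≤ φ (t - τ) * m₀ := by
      have hne : ∀ᵐ (τ : ℝ) ∂volume, τ ≠ t := by
        rw [ae_iff]
        convert Real.volume_singleton (a := t) using 2
        ext τ; simp
      filter_upwards [ae_restrict_of_ae hne, ae_restrict_mem measurableSet_Icc] with τ hτne hτmem
      have hτlt : τ < t := lt_of_le_of_ne hτmem.2 hτne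
      have hpos : (0:ℝ) < t - τ := by linarith
      have h1 := hS (t - τ) hpos (g τ)
      have h2 : ‖g τ‖ ≤ m₀ := hgb τ
      have hE : (0:ℝ) < Real.exp (-c * (t - τ)) := Real.exp_pos _
      have h4 : (0:ℝ) ≤ (t - τ) ^ (-α) := (Real.rpow_pos_of_pos hpos _).le
      calc ‖Sα (t - τ) (g τ)‖ ≤ M * Real.exp (-c * (t - τ)) * (t - τ) ^ (-α) * ‖g τ‖ := h1
        _ ≤ M * Real.exp (-c * (t - τ)) * (t - τ) ^ (-α) * m₀ := by
            gcongr
        _ = φ (t - τ) * m₀ := rfl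
    have hbint : IntervalIntegrable (fun τ => φ (t - τ) * m₀) volume t' t := by
      have := ((hφint (t - t') (t - t)).comp_sub_left t)
      simpa using this.mul_const m₀
    have term2 : ‖∫ τ in t'..t, Sα (t - τ) (g τ)‖ ≤ m₀ * M * K := by
      calc ‖∫ τ in t'..t, Sα (t - τ) (g τ)‖
          ≤ ∫ τ in t'..t, ‖Sα (t - τ) (g τ)‖ :=
            norm_integral_le_integral_norm htt'.le
        _ ≤ ∫ τ in t'..t, φ (t - τ) * m₀ :=
            integral_mono_ae_restrict htt'.le
              ((hint t' t htt').norm) hbint hbd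
        _ = (∫ s in (0:ℝ)..T, φ s) * m₀ := by
            rw [intervalIntegral.integral_mul_const,
              integral_comp_sub_left φ t]
            simp [hTeq]
        _ ≤ M * K * m₀ := by
            have hK : (0:ℝ) < K := by
              rw [hKdef]; positivity
            have := hφest T hT1
            nlinarith
        _ = m₀ * M * K := by ring
    calc ‖u t‖ = ‖Sα (t - t') (ι (u t')) + ∫ τ in t'..t, Sα (t - τ) (g τ)‖ := by rw [heq]
      _ ≤ ‖Sα (t - t') (ι (u t'))‖ + ‖∫ τ in t'..t, Sα (t - τ) (g τ)‖ := norm_add_le _ _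
      _ ≤ M * C * B * Real.exp (-c * T) + m₀ * M * K := add_le_add term1 term2
  -- take the limit T → ∞
  have hlim : Filter.Tendsto (fun T => M * C * B * Real.exp (-c * T) + m₀ * M * K)
      Filter.atTop (nhds (m₀ * M * K)) := by
    have h1 : Filter.Tendsto (fun T : ℝ => Real.exp (-c * T)) Filter.atTop (nhds 0) := by
      have h2 : Filter.Tendsto (fun T : ℝ => c * T) Filter.atTop Filter.atTop :=
        Filter.Tendsto.const_mul_atTop hc Filter.tendsto_id
      have h4 := Real.tendsto_exp_neg_atTop_nhds_zero.comp h2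
      exact h4.congr (fun x => by simp [Function.comp, neg_mul])
    have h3 : Filter.Tendsto (fun T : ℝ => M * C * B * Real.exp (-c * T))
        Filter.atTop (nhds 0) := by
      simpa using h1.const_mul (M * C * B)
    simpa using h3.add tendsto_const_nhds
  refine ge_of_tendsto hlim ?_
  filter_upwards [Filter.eventually_ge_atTop 1, Filter.eventually_ge_atTop t] with T h1 h2
  exact key T h1 h2
end

section
/- Let X be a real Banach space and S : ℝ → (X →L X) a one-parameter group of bounded linear operators, i.e. S(0) = id and S(t+s) = S(t) ∘ S(s) for all t, s ∈ ℝ, such that for some constants M, c > 0 one has ‖S(t) x‖ ≤ M e^{c t} ‖x‖ for all t ≤ 0 and x ∈ X. Let m₀, B > 0, let g : ℝ → X be strongly measurable with ‖g(τ)‖ ≤ m₀ for all τ ∈ ℝ, and let u : ℝ → X satisfy ‖u(t)‖ ≤ B for all t ≥ 0 and u(t) = S(t−t') u(t') + ∫_{t'}^{t} S(t−τ) g(τ) dτ (Bochner integral) for all t' < t. Then ‖u(t)‖ ≤ m₀ M / c for all t ∈ ℝ. -/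
open MeasureTheory

/-- Abstract form of inequality (fs7) from the proof of Lemma 3.3: a full solution
of the variation-of-constants formula for a group of operators satisfying
`‖S(t)x‖ ≤ M e^{ct}‖x‖` for `t ≤ 0`, which is bounded on `[0, +∞)`, satisfies
the uniform bound `‖u(t)‖ ≤ m₀ M / c`. -/
theorem stmt_3
    {X : Type*} [NormedAddCommGroup X] [NormedSpace ℝ X] [CompleteSpace X]
    (S : ℝ → (X →L[ℝ] X))
    (hS0 : S 0 = ContinuousLinearMap.id ℝ X)
    (hSgrp : ∀ t s : ℝ, S (t + s) = (S t).comp (S s))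
    (M c : ℝ) (hM : 0 < M) (hc : 0 < c)
    (hSest : ∀ t : ℝ, t ≤ 0 → ∀ x : X, ‖S t x‖ ≤ M * Real.exp (c * t) * ‖x‖)
    (m₀ B : ℝ) (hm₀ : 0 < m₀) (hB : 0 < B)
    (g : ℝ → X) (hg : StronglyMeasurable g) (hgb : ∀ τ : ℝ, ‖g τ‖ ≤ m₀)
    (u : ℝ → X) (hub : ∀ t : ℝ, 0 ≤ t → ‖u t‖ ≤ B)
    (hint : ∀ t' t : ℝ, t' < t →
      IntervalIntegrable (fun τ => S (t - τ) (g τ)) volume t' t)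
    (hu : ∀ t' t : ℝ, t' < t →
      u t = S (t - t') (u t') + ∫ τ in t'..t, S (t - τ) (g τ)) :
    ∀ t : ℝ, ‖u t‖ ≤ m₀ * M / c := by
  intro t₀
  have key : ∀ t : ℝ, t₀ < t → 0 ≤ t →
      ‖u t₀‖ ≤ M * B * Real.exp (c * (t₀ - t)) + m₀ * M / c := by
    intro t ht ht0
    have hcomp : ∀ s : X, S (t₀ - t) (S (t - t₀) s) = s := by
      intro s
      have h1 := hSgrp (t₀ - t) (t - t₀)
      rw [show (t₀ - t) + (t - t₀) = 0 by ring, hS0] at h1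
      have := congrArg (fun (L : X →L[ℝ] X) => L s) h1
      simpa using this.symm
    have hformula := hu t₀ t ht
    have happly := congrArg (fun x => S (t₀ - t) x) hformula
    simp only [map_add, hcomp] at happly
    rw [← (S (t₀ - t)).intervalIntegral_comp_comm (hint t₀ t ht)] at happly
    have hS2 : ∀ τ : ℝ, S (t₀ - t) (S (t - τ) (g τ)) = S (t₀ - τ) (g τ) := by
      intro τ
      have h1 := hSgrp (t₀ - t) (t - τ)
      rw [show (t₀ - t) + (t - τ) = t₀ - τ by ring] at h1
      exact (congrArg (fun (L : X →L[ℝ] X) => L (g τ)) h1).symm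
    simp only [hS2] at happly
    have hut0 : u t₀ = S (t₀ - t) (u t) - ∫ τ in t₀..t, S (t₀ - τ) (g τ) := by
      rw [happly]; abel
    rw [hut0]
    have hn1 : ‖S (t₀ - t) (u t)‖ ≤ M * B * Real.exp (c * (t₀ - t)) := by
      calc ‖S (t₀ - t) (u t)‖ ≤ M * Real.exp (c * (t₀ - t)) * ‖u t‖ :=
            hSest _ (by linarith) _
        _ ≤ M * Real.exp (c * (t₀ - t)) * B :=
            mul_le_mul_of_nonneg_left (hub t ht0) (by positivity)
        _ = M * B * Real.exp (c * (t₀ - t)) := by ring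
    have hcont : Continuous (fun τ : ℝ => M * Real.exp (c * (t₀ - τ)) * m₀) := by
      fun_prop
    have hbound_int : IntervalIntegrable (fun τ => M * Real.exp (c * (t₀ - τ)) * m₀)
        volume t₀ t := hcont.intervalIntegrable _ _
    have hn2 : ‖∫ τ in t₀..t, S (t₀ - τ) (g τ)‖ ≤ m₀ * M / c := by
      have hle : ∀ᵐ τ ∂(volume.restrict (Set.uIoc t₀ t)),
          ‖S (t₀ - τ) (g τ)‖ ≤ M * Real.exp (c * (t₀ - τ)) * m₀ := by
        refine (ae_restrict_iff' measurableSet_uIoc).mpr (Filter.Eventually.of_forall ?_)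
        intro τ hτ
        rw [Set.uIoc_of_le ht.le] at hτ
        calc ‖S (t₀ - τ) (g τ)‖ ≤ M * Real.exp (c * (t₀ - τ)) * ‖g τ‖ :=
              hSest _ (by linarith [hτ.1]) _
          _ ≤ M * Real.exp (c * (t₀ - τ)) * m₀ :=
              mul_le_mul_of_nonneg_left (hgb τ) (by positivity)
      refine (intervalIntegral.norm_integral_le_abs_of_norm_le hle hbound_int).trans ?_
      have hderiv : ∀ τ ∈ Set.uIcc t₀ t,
          HasDerivAt (fun τ => -(M * m₀ / c) * Real.exp (c * (t₀ - τ)))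
            (M * Real.exp (c * (t₀ - τ)) * m₀) τ := by
        intro τ _
        have h := ((Real.hasDerivAt_exp (c * (t₀ - τ))).comp τ
          (((hasDerivAt_id τ).const_sub t₀).const_mul c)).const_mul (-(M * m₀ / c))
        refine h.congr_deriv ?_
        symm
        field_simp
      have hval := intervalIntegral.integral_eq_sub_of_hasDerivAt hderiv hbound_int
      have hE1 : Real.exp (c * (t₀ - t)) ≤ 1 :=
        Real.exp_le_one_iff.mpr (by nlinarith)
      have hE0 : (0:ℝ) < Real.exp (c * (t₀ - t)) := Real.exp_pos _
      have hpos : (0:ℝ) < M * m₀ / c := by positivity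
      simp only [sub_self, mul_zero, Real.exp_zero, mul_one] at hval
      rw [hval]
      have hmle : M * m₀ / c * Real.exp (c * (t₀ - t)) ≤ M * m₀ / c * 1 :=
        mul_le_mul_of_nonneg_left hE1 hpos.le
      have hPE := mul_pos hpos hE0
      rw [abs_of_nonneg (by linarith)]
      rw [show m₀ * M / c = M * m₀ / c by ring]
      linarith
    calc ‖S (t₀ - t) (u t) - ∫ τ in t₀..t, S (t₀ - τ) (g τ)‖
        ≤ ‖S (t₀ - t) (u t)‖ + ‖∫ τ in t₀..t, S (t₀ - τ) (g τ)‖ := norm_sub_le _ _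
      _ ≤ M * B * Real.exp (c * (t₀ - t)) + m₀ * M / c := add_le_add hn1 hn2
  have hb : Filter.Tendsto (fun t : ℝ => t₀ - t) Filter.atTop Filter.atBot := by
    simpa [sub_eq_add_neg] using
      Filter.tendsto_atBot_add_const_left Filter.atTop t₀
        (Filter.tendsto_neg_atBot_iff.mpr Filter.tendsto_id)
  have hlim : Filter.Tendsto (fun t => M * B * Real.exp (c * (t₀ - t)) + m₀ * M / c)
      Filter.atTop (nhds (m₀ * M / c)) := by
    have h1 : Filter.Tendsto (fun t : ℝ => c * (t₀ - t)) Filter.atTop Filter.atBot :=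
      hb.const_mul_atBot hc
    have h2 : Filter.Tendsto (fun t => M * B * Real.exp (c * (t₀ - t))) Filter.atTop
        (nhds 0) := by
      have := (Real.tendsto_exp_atBot.comp h1).const_mul (M * B)
      simpa using this
    simpa using h2.add tendsto_const_nhds
  refine ge_of_tendsto hlim ?_
  filter_upwards [Filter.eventually_ge_atTop (max (t₀ + 1) 1)] with t ht
  have h1 : t₀ + 1 ≤ t := le_trans (le_max_left _ _) ht
  have h2 : (1:ℝ) ≤ t := le_trans (le_max_right _ _) ht
  exact key t (by linarith) (by linarith)
end

section
/- Let Ω ⊂ ℝⁿ be a nonempty open bounded set, m > 0, and f : Ω × ℝ × ℝⁿ → ℝ a continuous function with |f(x,s,y)| ≤ m for all (x,s,y). Let f₊, f₋ : Ω → ℝ be continuous functions such that, for every x ∈ Ω, f(x,s,y) → f₊(x) as s → +∞ and f(x,s,y) → f₋(x) as s → −∞, uniformly with respect to y ∈ ℝⁿ. Let X₀ be a finite-dimensional subspace of L²(Ω) such that for every ū ∈ X₀ with ū ≠ 0 the Landesman–Lazer condition (LL1) holds: ∫_{{x : ū(x) > 0}} f₊(x) ū(x) dx + ∫_{{x : ū(x)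 < 0}} f₋(x) ū(x) dx > 0. Then for every M > 0 there exists R > 0 such that for every measurable w : Ω → ℝ with |w(x)| ≤ M for almost every x ∈ Ω, every measurable y : Ω → ℝⁿ, and every ū ∈ X₀ with ‖ū‖_{L²(Ω)} ≥ R, one has ∫_Ω f(x, w(x) + ū(x), y(x)) · ū(x) dx > 0. -/
open MeasureTheory Filter Topology
open scoped ENNReal NNReal

set_option maxHeartbeats 4000000 in
set_option synthInstance.maxHeartbeats 400000 in
/-- Theorem 4.3(i) of the paper: the Landesman–Lazer condition (LL1) implies the
geometric condition (G1) for the Niemytzki operator. -/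
theorem stmt_5
    {n : ℕ} (Ω : Set (Fin n → ℝ)) (hΩne : Ω.Nonempty) (hΩo : IsOpen Ω)
    (hΩb : Bornology.IsBounded Ω)
    (m : ℝ) (hm : 0 < m)
    (f : (Fin n → ℝ) → ℝ → (Fin n → ℝ) → ℝ)
    (hf : ContinuousOn (fun p : (Fin n → ℝ) × ℝ × (Fin n → ℝ) => f p.1 p.2.1 p.2.2)
      (Ω ×ˢ (Set.univ : Set (ℝ × (Fin n → ℝ)))))
    (hfb : ∀ x ∈ Ω, ∀ (s : ℝ) (y : Fin n → ℝ), |f x s y| ≤ m)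
    (fp fm : (Fin n → ℝ) → ℝ)
    (hfpc : ContinuousOn fp Ω) (hfmc : ContinuousOn fm Ω)
    (hlimp : ∀ x ∈ Ω, TendstoUniformly (fun (s : ℝ) (y : Fin n → ℝ) => f x s y)
      (fun _ => fp x) atTop)
    (hlimm : ∀ x ∈ Ω, TendstoUniformly (fun (s : ℝ) (y : Fin n → ℝ) => f x s y)
      (fun _ => fm x) atBot)
    (X₀ : Submodule ℝ (Lp ℝ 2 (volume.restrict Ω))) (hX₀ : FiniteDimensional ℝ X₀)
    (hLL1 : ∀ u : Lp ℝ 2 (volume.restrict Ω), u ∈ X₀ → u ≠ 0 →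
      0 < (∫ x in {x | 0 < u x}, fp x * u x ∂(volume.restrict Ω)) +
          ∫ x in {x | u x < 0}, fm x * u x ∂(volume.restrict Ω)) :
    ∀ M : ℝ, 0 < M → ∃ R : ℝ, 0 < R ∧
      ∀ w : (Fin n → ℝ) → ℝ, Measurable w →
        (∀ᵐ x ∂(volume.restrict Ω), |w x| ≤ M) →
      ∀ y : (Fin n → ℝ) → (Fin n → ℝ), Measurable y →
      ∀ u : Lp ℝ 2 (volume.restrict Ω), u ∈ X₀ → R ≤ ‖u‖ →
        0 < ∫ x, f x (w x + u x) (y x) * u x ∂(volume.restrict Ω) := by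
  classical
  haveI := hX₀
  haveI hfin : IsFiniteMeasure (volume.restrict Ω) := by
    constructor
    rw [Measure.restrict_apply_univ]
    exact hΩb.measure_lt_top
  -- a.e. bound on f, fp, fm
  have haeΩ : ∀ᵐ x ∂(volume.restrict Ω), x ∈ Ω := ae_restrict_mem hΩo.measurableSet
  have hfpΩ : ∀ x ∈ Ω, |fp x| ≤ m := by
    intro x hx
    have h1 : Tendsto (fun s : ℝ => |f x s 0|) atTop (𝓝 |fp x|) :=
      ((hlimp x hx).tendsto_at 0).abs
    exact le_of_tendsto h1 (Eventually.of_forall fun s => hfb x hx s 0)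
  have hfmΩ : ∀ x ∈ Ω, |fm x| ≤ m := by
    intro x hx
    have h1 : Tendsto (fun s : ℝ => |f x s 0|) atBot (𝓝 |fm x|) :=
      ((hlimm x hx).tendsto_at 0).abs
    exact le_of_tendsto h1 (Eventually.of_forall fun s => hfb x hx s 0)
  intro M hM
  by_contra hcon
  push_neg at hcon
  have hseq : ∀ k : ℕ, ∃ w : (Fin n → ℝ) → ℝ, Measurable w ∧
      (∀ᵐ x ∂(volume.restrict Ω), |w x| ≤ M) ∧ ∃ y : (Fin n → ℝ) → (Fin n → ℝ), Measurable y ∧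
      ∃ u : Lp ℝ 2 (volume.restrict Ω), u ∈ X₀ ∧ ((k : ℝ) + 1) ≤ ‖u‖ ∧
        (∫ x, f x (w x + u x) (y x) * u x ∂(volume.restrict Ω)) ≤ 0 := by
    intro k
    exact hcon ((k : ℝ) + 1) (by positivity)
  choose w hwm hwb y hym u huX hun hui using hseq
  have hupos : ∀ k, (0 : ℝ) < ‖u k‖ := fun k =>
    lt_of_lt_of_le (by positivity) (hun k)
  -- normalized sequence in X₀
  set V : ℕ → X₀ := fun k => (‖u k‖)⁻¹ • (⟨u k, huX k⟩ : X₀) with hVdef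
  have hVnorm : ∀ k, ‖V k‖ = 1 := by
    intro k
    have : ‖(⟨u k, huX k⟩ : X₀)‖ = ‖u k‖ := rfl
    rw [hVdef]
    simp only [norm_smul, norm_inv, norm_norm, this]
    exact inv_mul_cancel₀ (hupos k).ne'
  have hVmem : ∀ k, V k ∈ Metric.sphere (0 : X₀) 1 := by
    intro k
    simpa [mem_sphere_zero_iff_norm] using hVnorm k
  haveI : ProperSpace X₀ := FiniteDimensional.proper ℝ X₀
  obtain ⟨vlim, hvlim_mem, φ, hφmono, hφtend⟩ :=
    (isCompact_sphere (0 : X₀) 1).tendsto_subseq hVmem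
  -- convergence of the underlying Lp elements
  have hLp_tend : Tendsto (fun i => ((V (φ i) : X₀) : Lp ℝ 2 (volume.restrict Ω))) atTop
      (𝓝 ((vlim : X₀) : Lp ℝ 2 (volume.restrict Ω))) :=
    (continuous_subtype_val.tendsto _).comp hφtend
  haveI : Fact ((1 : ℝ≥0∞) ≤ 2) := ⟨one_le_two⟩
  have hmeas_tend := tendstoInMeasure_of_tendsto_Lp hLp_tend
  obtain ⟨ns, hnsmono, hae⟩ := hmeas_tend.exists_seq_tendsto_ae
  set ρ : ℕ → ℕ := fun i => φ (ns i) with hρdef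
  have hρmono : StrictMono ρ := hφmono.comp hnsmono
  set vL : Lp ℝ 2 (volume.restrict Ω) := ((vlim : X₀) : Lp ℝ 2 (volume.restrict Ω)) with hvLdef
  set v : (Fin n → ℝ) → ℝ := ⇑vL with hvdef
  have hvL_ne : vL ≠ 0 := by
    have h1 : ‖vL‖ = 1 := by
      have := mem_sphere_zero_iff_norm.mp hvlim_mem
      simpa [hvLdef] using this
    intro h; rw [h] at h1; simp at h1
  have hvmeas : StronglyMeasurable v := Lp.stronglyMeasurable vL
  have hvint : Integrable v (volume.restrict Ω) :=
    memLp_one_iff_integrable.mp ((Lp.memLp vL).mono_exponent one_le_two)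
  -- the limit function
  set g : (Fin n → ℝ) → ℝ := fun x =>
    Set.indicator {x | 0 < v x} (fun x => fp x * v x) x +
    Set.indicator {x | v x < 0} (fun x => fm x * v x) x with hgdef
  have hs1 : MeasurableSet {x | 0 < v x} :=
    measurableSet_lt measurable_const hvmeas.measurable
  have hs2 : MeasurableSet {x | v x < 0} :=
    measurableSet_lt hvmeas.measurable measurable_const
  have hbound_int : Integrable (fun x => m * |v x|) (volume.restrict Ω) := hvint.abs.const_mul m
  have hind1_int : Integrable (Set.indicator {x | 0 < v x} (fun x => fp x * v x)) (volume.restrict Ω) := by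
    have hmeas1 : AEStronglyMeasurable
        (Set.indicator {x | 0 < v x} (fun x => fp x * v x)) (volume.restrict Ω) := by
      exact AEStronglyMeasurable.indicator
        (((hfpc.aemeasurable hΩo.measurableSet).mul hvmeas.aemeasurable).aestronglyMeasurable) hs1
    refine hbound_int.mono' hmeas1 ?_
    filter_upwards [haeΩ] with x hx
    by_cases hmem : x ∈ {x | 0 < v x}
    · rw [Set.indicator_of_mem hmem]
      calc ‖fp x * v x‖ = |fp x| * |v x| := abs_mul _ _
        _ ≤ m * |v x| := by
          exact mul_le_mul_of_nonneg_right (hfpΩ x hx) (abs_nonneg _)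
    · rw [Set.indicator_of_notMem hmem]; simp only [norm_zero]; positivity
  have hind2_int : Integrable (Set.indicator {x | v x < 0} (fun x => fm x * v x)) (volume.restrict Ω) := by
    have hmeas2 : AEStronglyMeasurable
        (Set.indicator {x | v x < 0} (fun x => fm x * v x)) (volume.restrict Ω) := by
      exact AEStronglyMeasurable.indicator
        (((hfmc.aemeasurable hΩo.measurableSet).mul hvmeas.aemeasurable).aestronglyMeasurable) hs2
    refine hbound_int.mono' hmeas2 ?_
    filter_upwards [haeΩ] with x hx
    by_cases hmem : x ∈ {x | v x < 0}
    · rw [Set.indicator_of_mem hmem]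
      calc ‖fm x * v x‖ = |fm x| * |v x| := abs_mul _ _
        _ ≤ m * |v x| := by
          exact mul_le_mul_of_nonneg_right (hfmΩ x hx) (abs_nonneg _)
    · rw [Set.indicator_of_notMem hmem]; simp only [norm_zero]; positivity
  have hgpos : 0 < ∫ x, g x ∂(volume.restrict Ω) := by
    have hsplit : ∫ x, g x ∂(volume.restrict Ω) =
        (∫ x in {x | 0 < v x}, fp x * v x ∂(volume.restrict Ω)) +
        ∫ x in {x | v x < 0}, fm x * v x ∂(volume.restrict Ω) := by
      rw [hgdef]
      rw [integral_add hind1_int hind2_int, integral_indicator hs1, integral_indicator hs2]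
    rw [hsplit]
    exact hLL1 vL vlim.2 hvL_ne
  -- the sequence of integrands
  set F : ℕ → (Fin n → ℝ) → ℝ :=
    fun i x => f x (w (ρ i) x + (u (ρ i)) x) (y (ρ i) x) with hFdef
  have hFmeas : ∀ i, AEStronglyMeasurable (F i) (volume.restrict Ω) := by
    intro i
    set Φ : (Fin n → ℝ) → (Fin n → ℝ) × ℝ × (Fin n → ℝ) :=
      fun x => (x, (w (ρ i) x + (u (ρ i)) x, y (ρ i) x)) with hΦdef
    have hΦ : AEMeasurable Φ (volume.restrict Ω) := by
      exact aemeasurable_id.prodMk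
        (((hwm (ρ i)).aemeasurable.add
          (Lp.aestronglyMeasurable (u (ρ i))).aemeasurable).prodMk (hym (ρ i)).aemeasurable)
    have hS : MeasurableSet (Ω ×ˢ (Set.univ : Set (ℝ × (Fin n → ℝ)))) :=
      hΩo.measurableSet.prod MeasurableSet.univ
    have hmem : ∀ᵐ x ∂(volume.restrict Ω), Φ x ∈ Ω ×ˢ (Set.univ : Set (ℝ × (Fin n → ℝ))) := by
      filter_upwards [haeΩ] with x hx
      exact ⟨hx, trivial⟩
    have hmap : ∀ᵐ p ∂((volume.restrict Ω).map Φ), p ∈ Ω ×ˢ (Set.univ : Set (ℝ × (Fin n → ℝ))) :=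
      (ae_map_iff hΦ hS).mpr hmem
    have hfm' : AEMeasurable (fun p : (Fin n → ℝ) × ℝ × (Fin n → ℝ) => f p.1 p.2.1 p.2.2)
        ((volume.restrict Ω).map Φ) := by
      have := hf.aemeasurable (μ := (volume.restrict Ω).map Φ) hS
      rwa [Measure.restrict_eq_self_of_ae_mem hmap] at this
    exact (hfm'.comp_aemeasurable hΦ).aestronglyMeasurable
  have hFbound : ∀ i, ∀ᵐ x ∂(volume.restrict Ω), |F i x| ≤ m := by
    intro i
    filter_upwards [haeΩ] with x hx
    exact hfb x hx _ _
  have hFvint : ∀ i, Integrable (fun x => F i x * v x) (volume.restrict Ω) := by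
    intro i
    refine hbound_int.mono' ((hFmeas i).mul hvmeas.aestronglyMeasurable) ?_
    filter_upwards [hFbound i] with x hx
    calc ‖F i x * v x‖ = |F i x| * |v x| := abs_mul _ _
      _ ≤ m * |v x| := mul_le_mul_of_nonneg_right hx (abs_nonneg _)
  -- Lp elements for the normalized sequence
  set VL : ℕ → Lp ℝ 2 (volume.restrict Ω) := fun i => ((V (ρ i) : X₀) : Lp ℝ 2 (volume.restrict Ω)) with hVLdef
  have hVL_tend : Tendsto VL atTop (𝓝 vL) := by
    exact (continuous_subtype_val.tendsto _).comp (hφtend.comp hnsmono.tendsto_atTop)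
  have hVL_int : ∀ i, Integrable (⇑(VL i)) (volume.restrict Ω) := fun i =>
    memLp_one_iff_integrable.mp ((Lp.memLp (VL i)).mono_exponent one_le_two)
  have hFVLint : ∀ i, Integrable (fun x => F i x * (VL i) x) (volume.restrict Ω) := by
    intro i
    refine ((hVL_int i).abs.const_mul m).mono'
      ((hFmeas i).mul (Lp.aestronglyMeasurable (VL i))) ?_
    filter_upwards [hFbound i] with x hx
    calc ‖F i x * (VL i) x‖ = |F i x| * |(VL i) x| := abs_mul _ _
      _ ≤ m * |(VL i) x| := mul_le_mul_of_nonneg_right hx (abs_nonneg _)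
  -- key : the integral of F i * VL i is ≤ 0
  have hint_nonpos : ∀ i, (∫ x, F i x * (VL i) x ∂(volume.restrict Ω)) ≤ 0 := by
    intro i
    have hcoe : ∀ᵐ x ∂(volume.restrict Ω), (VL i) x = (‖u (ρ i)‖)⁻¹ * (u (ρ i)) x := by
      have h1 : VL i = (‖u (ρ i)‖)⁻¹ • (u (ρ i)) := rfl
      rw [h1]
      filter_upwards [Lp.coeFn_smul ((‖u (ρ i)‖)⁻¹ : ℝ) (u (ρ i))] with x hx
      simpa using hx
    have h2 : (∫ x, F i x * (VL i) x ∂(volume.restrict Ω)) =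
        (‖u (ρ i)‖)⁻¹ * ∫ x, F i x * (u (ρ i)) x ∂(volume.restrict Ω) := by
      rw [← integral_const_mul]
      refine integral_congr_ae ?_
      filter_upwards [hcoe] with x hx
      rw [hx]; ring
    rw [h2]
    exact mul_nonpos_of_nonneg_of_nonpos (by positivity) (hui (ρ i))
  -- split the integral
  set A : ℕ → ℝ := fun i => ∫ x, F i x * v x ∂(volume.restrict Ω) with hAdef
  set r : ℕ → ℝ := fun i => ∫ x, F i x * ((VL i) x - v x) ∂(volume.restrict Ω) with hrdef
  have hsplit : ∀ i, (∫ x, F i x * (VL i) x ∂(volume.restrict Ω)) = A i + r i := by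
    intro i
    have h1 : (fun x => F i x * (VL i) x) =
        fun x => F i x * v x + F i x * ((VL i) x - v x) := by
      funext x; ring
    rw [h1, integral_add (hFvint i) ?_]
    have h2 : (fun x => F i x * ((VL i) x - v x)) =
        fun x => F i x * (VL i) x - F i x * v x := by funext x; ring
    rw [h2]
    exact (hFVLint i).sub (hFvint i)
  -- r tends to 0
  have hFmem : ∀ i, MemLp (F i) 2 (volume.restrict Ω) := fun i =>
    MemLp.of_bound (hFmeas i) m (by
      filter_upwards [hFbound i] with x hx
      simpa using hx)
  have hr0 : Tendsto r atTop (𝓝 0) := by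
    set K : ℝ := (measureUnivNNReal (volume.restrict Ω) : ℝ) ^ ((2 : ℝ≥0∞).toReal)⁻¹ * m with hKdef
    have hrb : ∀ i, ‖r i‖ ≤ K * ‖VL i - vL‖ := by
      intro i
      set Fi : Lp ℝ 2 (volume.restrict Ω) := (hFmem i).toLp (F i) with hFidef
      have hinner : r i = inner ℝ Fi (VL i - vL) := by
        rw [L2.inner_def]
        refine (integral_congr_ae ?_).symm
        filter_upwards [(hFmem i).coeFn_toLp, Lp.coeFn_sub (VL i) vL] with x hx1 hx2
        simp only [RCLike.inner_apply, conj_trivial, hx1, hx2, Pi.sub_apply]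
        rw [hFidef, hx1, hvdef]; ring
      have hFi_norm : ‖Fi‖ ≤ K := by
        rw [hKdef]
        refine Lp.norm_le_of_ae_bound hm.le ?_
        filter_upwards [(hFmem i).coeFn_toLp, hFbound i] with x hx1 hx2
        rw [hx1]; simpa using hx2
      calc ‖r i‖ = |inner ℝ Fi (VL i - vL)| := by rw [hinner]; rfl
        _ ≤ ‖Fi‖ * ‖VL i - vL‖ := abs_real_inner_le_norm _ _
        _ ≤ K * ‖VL i - vL‖ := by
            refine mul_le_mul_of_nonneg_right hFi_norm (norm_nonneg _)
    have hKnn : Tendsto (fun i => K * ‖VL i - vL‖) atTop (𝓝 0) := by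
      have : Tendsto (fun i => VL i - vL) atTop (𝓝 0) := by
        have h0 : Tendsto (fun i => VL i - vL) atTop (𝓝 (vL - vL)) :=
          hVL_tend.sub tendsto_const_nhds
        simpa using h0
      simpa using (this.norm.const_mul K)
    exact squeeze_zero_norm hrb hKnn
  -- A tends to ∫ g by dominated convergence
  have hA_tend : Tendsto A atTop (𝓝 (∫ x, g x ∂(volume.restrict Ω))) := by
    refine tendsto_integral_of_dominated_convergence (fun x => m * |v x|)
      (fun i => (hFmeas i).mul hvmeas.aestronglyMeasurable) hbound_int ?_ ?_
    · intro i
      filter_upwards [hFbound i] with x hx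
      calc ‖F i x * v x‖ = |F i x| * |v x| := abs_mul _ _
        _ ≤ m * |v x| := mul_le_mul_of_nonneg_right hx (abs_nonneg _)
    · -- pointwise a.e. convergence
      have hweq : ∀ᵐ x ∂(volume.restrict Ω), ∀ i, |w (ρ i) x| ≤ M := ae_all_iff.mpr fun i => hwb (ρ i)
      have hVLeq : ∀ᵐ x ∂(volume.restrict Ω), ∀ i, (VL i) x = (‖u (ρ i)‖)⁻¹ * (u (ρ i)) x := by
        refine ae_all_iff.mpr fun i => ?_
        have h1 : VL i = (‖u (ρ i)‖)⁻¹ • (u (ρ i)) := rfl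
        rw [h1]
        filter_upwards [Lp.coeFn_smul ((‖u (ρ i)‖)⁻¹ : ℝ) (u (ρ i))] with x hx
        simpa using hx
      have haeconv : ∀ᵐ x ∂(volume.restrict Ω), Tendsto (fun i => (VL i) x) atTop (𝓝 (v x)) := hae
      filter_upwards [haeΩ, hweq, hVLeq, haeconv] with x hxΩ hxw hxe hxc
      -- at such x
      have hux : ∀ i, (u (ρ i)) x = ‖u (ρ i)‖ * (VL i) x := by
        intro i
        rw [hxe i, ← mul_assoc, mul_inv_cancel₀ (hupos (ρ i)).ne', one_mul]
      have hnormge : ∀ i : ℕ, ((i : ℝ) + 1) ≤ ‖u (ρ i)‖ := by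
        intro i
        have hle' : (i : ℝ) ≤ (ρ i : ℝ) := Nat.cast_le.mpr hρmono.le_apply
        calc ((i : ℝ) + 1) ≤ ((ρ i : ℝ) + 1) := by linarith
          _ ≤ ‖u (ρ i)‖ := hun (ρ i)
      rcases lt_trichotomy 0 (v x) with hv | hv | hv
      · -- v x > 0
        have hgx : g x = fp x * v x := by
          rw [hgdef]
          simp only
          rw [Set.indicator_of_mem (by exact hv), Set.indicator_of_notMem (by
            simp only [Set.mem_setOf_eq, not_lt]; linarith), add_zero]
        rw [hgx]
        have hs_tend : Tendsto (fun i => w (ρ i) x + (u (ρ i)) x) atTop atTop := by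
          have hev : ∀ᶠ i in atTop, v x / 2 ≤ (VL i) x :=
            hxc.eventually (eventually_ge_nhds (by linarith))
          have hlow : Tendsto (fun i : ℕ => ((i : ℝ) + 1) * (v x / 2) - M)
              atTop atTop := by
            refine tendsto_atTop_add_const_right _ (-M) ?_
            exact (tendsto_atTop_add_const_right _ 1 tendsto_natCast_atTop_atTop).atTop_mul_const
              (by linarith)
          refine tendsto_atTop_mono' atTop ?_ hlow
          filter_upwards [hev] with i hi
          have h1 : -M ≤ w (ρ i) x := neg_le_of_abs_le (hxw i)
          have h2 : ((i : ℝ) + 1) * (v x / 2) ≤ ‖u (ρ i)‖ * (VL i) x := by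
            refine mul_le_mul (hnormge i) hi (by linarith) (norm_nonneg _)
          rw [hux i]
          linarith
        have hFf : Tendsto (fun i => F i x) atTop (𝓝 (fp x)) := by
          rw [Metric.tendsto_nhds]
          intro ε hε
          have hev2 := (Metric.tendstoUniformly_iff.mp (hlimp x hxΩ)) ε hε
          filter_upwards [hs_tend.eventually hev2] with i hi
          have h3 := hi (y (ρ i) x)
          rw [dist_comm] at h3
          exact h3
        exact hFf.mul_const _
      · -- v x = 0
        have hgx : g x = 0 := by
          rw [hgdef]
          simp only
          rw [Set.indicator_of_notMem (by simp [← hv]),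
            Set.indicator_of_notMem (by simp [← hv]), add_zero]
        rw [hgx, ← hv]
        simpa using tendsto_const_nhds (α := ℕ) (f := atTop) (a := (0:ℝ))
      · -- v x < 0
        have hgx : g x = fm x * v x := by
          rw [hgdef]
          simp only
          rw [Set.indicator_of_notMem (by
            simp only [Set.mem_setOf_eq, not_lt]; linarith),
            Set.indicator_of_mem (by exact hv), zero_add]
        rw [hgx]
        have hs_tend : Tendsto (fun i => w (ρ i) x + (u (ρ i)) x) atTop atBot := by
          have hev : ∀ᶠ i in atTop, (VL i) x ≤ v x / 2 :=
            hxc.eventually (eventually_le_nhds (by linarith))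
          have hlow : Tendsto (fun i : ℕ => ((i : ℝ) + 1) * (v x / 2) + M)
              atTop atBot := by
            refine tendsto_atBot_add_const_right _ M ?_
            exact (tendsto_atTop_add_const_right _ 1
              tendsto_natCast_atTop_atTop).atTop_mul_const_of_neg (by linarith)
          refine tendsto_atBot_mono' atTop ?_ hlow
          filter_upwards [hev] with i hi
          have h1 : w (ρ i) x ≤ M := le_of_abs_le (hxw i)
          have h2 : ‖u (ρ i)‖ * (VL i) x ≤ ((i : ℝ) + 1) * (v x / 2) := by
            have h3 : ‖u (ρ i)‖ * (VL i) x ≤ ((i : ℝ) + 1) * (VL i) x := by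
              refine mul_le_mul_of_nonpos_right (hnormge i) (by linarith)
            refine h3.trans ?_
            refine mul_le_mul_of_nonneg_left hi (by positivity)
          rw [hux i]
          linarith
        have hFf : Tendsto (fun i => F i x) atTop (𝓝 (fm x)) := by
          rw [Metric.tendsto_nhds]
          intro ε hε
          have hev2 := (Metric.tendstoUniformly_iff.mp (hlimm x hxΩ)) ε hε
          filter_upwards [hs_tend.eventually hev2] with i hi
          have h3 := hi (y (ρ i) x)
          rw [dist_comm] at h3
          exact h3
        exact hFf.mul_const _
  -- conclusion
  have hle : (∫ x, g x ∂(volume.restrict Ω)) ≤ 0 := by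
    have h1 : Tendsto (fun i => A i + r i) atTop (𝓝 ((∫ x, g x ∂(volume.restrict Ω)) + 0)) :=
      hA_tend.add hr0
    rw [add_zero] at h1
    refine le_of_tendsto h1 (Eventually.of_forall fun i => ?_)
    rw [← hsplit i]
    exact hint_nonpos i
  linarith
end

section
/- Let Ω ⊂ ℝⁿ be a nonempty open bounded set, m > 0, and f : Ω × ℝ × ℝⁿ → ℝ a continuous function with |f(x,s,y)| ≤ m for all (x,s,y). Let f₊, f₋ : Ω → ℝ be continuous functions such that, for every x ∈ Ω, f(x,s,y) → f₊(x) as s → +∞ and f(x,s,y) → f₋(x) as s → −∞, uniformly with respect to y ∈ ℝⁿ. Let X₀ be a finite-dimensional subspace of L²(Ω) such that for every ū ∈ X₀ with ū ≠ 0 the Landesman–Lazer condition (LL2) holds: ∫_{{x : ū(x) > 0}} f₊(x) ū(x) dx + ∫_{{x : ū(x) < 0}} f₋(x) ū(x) dx < 0. Then for every M > 0 there exists R > 0 such that for every measurable w : Ω → ℝ with |w(x)| ≤ M for almost every x ∈ Ω, every measurable y : Ω → ℝⁿ, and every ū ∈ X₀ with ‖ū‖_{L²(Ω)} ≥ R,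 one has ∫_Ω f(x, w(x) + ū(x), y(x)) · ū(x) dx < 0. -/
open MeasureTheory Filter Topology

set_option maxHeartbeats 2000000 in
set_option synthInstance.maxHeartbeats 400000 in
/-- Theorem 4.3(ii) of the paper: the Landesman–Lazer condition (LL2) implies the
geometric condition (G2) for the Niemytzki operator. -/
theorem stmt_6
    {n : ℕ} (Ω : Set (Fin n → ℝ)) (hΩne : Ω.Nonempty) (hΩo : IsOpen Ω)
    (hΩb : Bornology.IsBounded Ω)
    (m : ℝ) (hm : 0 < m)
    (f : (Fin n → ℝ) → ℝ → (Fin n → ℝ) → ℝ)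
    (hf : ContinuousOn (fun p : (Fin n → ℝ) × ℝ × (Fin n → ℝ) => f p.1 p.2.1 p.2.2)
      (Ω ×ˢ (Set.univ : Set (ℝ × (Fin n → ℝ)))))
    (hfb : ∀ x ∈ Ω, ∀ (s : ℝ) (y : Fin n → ℝ), |f x s y| ≤ m)
    (fp fm : (Fin n → ℝ) → ℝ)
    (hfpc : ContinuousOn fp Ω) (hfmc : ContinuousOn fm Ω)
    (hlimp : ∀ x ∈ Ω, TendstoUniformly (fun (s : ℝ) (y : Fin n → ℝ) => f x s y)
      (fun _ => fp x) atTop)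
    (hlimm : ∀ x ∈ Ω, TendstoUniformly (fun (s : ℝ) (y : Fin n → ℝ) => f x s y)
      (fun _ => fm x) atBot)
    (X₀ : Submodule ℝ (Lp ℝ 2 (volume.restrict Ω))) (hX₀ : FiniteDimensional ℝ X₀)
    (hLL2 : ∀ u : Lp ℝ 2 (volume.restrict Ω), u ∈ X₀ → u ≠ 0 →
      (∫ x in {x | 0 < u x}, fp x * u x ∂(volume.restrict Ω)) +
          (∫ x in {x | u x < 0}, fm x * u x ∂(volume.restrict Ω)) < 0) :
    ∀ M : ℝ, 0 < M → ∃ R : ℝ, 0 < R ∧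
      ∀ w : (Fin n → ℝ) → ℝ, Measurable w →
        (∀ᵐ x ∂(volume.restrict Ω), |w x| ≤ M) →
      ∀ y : (Fin n → ℝ) → (Fin n → ℝ), Measurable y →
      ∀ u : Lp ℝ 2 (volume.restrict Ω), u ∈ X₀ → R ≤ ‖u‖ →
        (∫ x, f x (w x + u x) (y x) * u x ∂(volume.restrict Ω)) < 0 := by

  classical
  intro M hM
  by_contra hcon
  push_neg at hcon
  haveI hfin : IsFiniteMeasure (volume.restrict Ω) :=
    ⟨by rw [Measure.restrict_apply_univ]; exact hΩb.measure_lt_top⟩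
  haveI : ProperSpace X₀ := FiniteDimensional.proper ℝ X₀
  choose w hwm hwb y hym u humem hunorm hupos using fun k : ℕ => hcon ((k:ℝ)+1) (by positivity)
  haveI := hX₀
  -- the elements inside X₀
  set U : ℕ → X₀ := fun k => ⟨u k, humem k⟩ with hUdef
  set c : ℕ → ℝ := fun k => ‖u k‖ with hcdef
  have hcpos : ∀ k, 0 < c k := fun k => lt_of_lt_of_le (by positivity) (hunorm k)
  have hcge : ∀ k : ℕ, (k:ℝ) + 1 ≤ c k := fun k => hunorm k
  have hUnorm : ∀ k, ‖U k‖ = c k := fun k => rfl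
  set V : ℕ → X₀ := fun k => (c k)⁻¹ • U k with hVdef
  have hVsph : ∀ k, V k ∈ Metric.sphere (0 : X₀) 1 := by
    intro k
    rw [mem_sphere_zero_iff_norm, hVdef]
    simp only [norm_smul, hUnorm, norm_inv, Real.norm_eq_abs,
      abs_of_pos (hcpos k)]
    rw [inv_mul_cancel₀ (hcpos k).ne']
  obtain ⟨Vl, hVlmem, φ, hφmono, hφtend⟩ :=
    (isCompact_sphere (0 : X₀) 1).tendsto_subseq hVsph
  set vlim : Lp ℝ 2 (volume.restrict Ω) := (Vl : Lp ℝ 2 (volume.restrict Ω)) with hvinf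
  have hvlimnorm : ‖vlim‖ = 1 := by
    have := mem_sphere_zero_iff_norm.mp hVlmem
    simpa [hvinf] using this
  have hvlimne : vlim ≠ 0 := by
    intro h0
    rw [h0] at hvlimnorm; simp at hvlimnorm
  have hLptend : Tendsto (fun k => ((V (φ k) : X₀) : Lp ℝ 2 (volume.restrict Ω))) atTop (𝓝 vlim) :=
    (continuous_subtype_val.tendsto Vl).comp hφtend
  have hmeasin : TendstoInMeasure (volume.restrict Ω) (fun k => ⇑((V (φ k) : X₀) : Lp ℝ 2 (volume.restrict Ω))) atTop ⇑vlim :=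
    tendstoInMeasure_of_tendsto_Lp hLptend
  obtain ⟨ψ, hψmono, hae⟩ := hmeasin.exists_seq_tendsto_ae
  set σ : ℕ → ℕ := φ ∘ ψ with hσdef
  have hσmono : StrictMono σ := hφmono.comp hψmono
  set vv : ℕ → Lp ℝ 2 (volume.restrict Ω) := fun k => ((V (σ k) : X₀) : Lp ℝ 2 (volume.restrict Ω)) with hvvdef
  have hvvtend : Tendsto vv atTop (𝓝 vlim) := hLptend.comp hψmono.tendsto_atTop
  have haev : ∀ᵐ x ∂(volume.restrict Ω), Tendsto (fun i => vv i x) atTop (𝓝 (vlim x)) := hae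
  -- the nonlinear functions
  set g : ℕ → (Fin n → ℝ) → ℝ := fun k x => f x (w (σ k) x + u (σ k) x) (y (σ k) x) with hgdef
  have hΩmeas : MeasurableSet Ω := hΩo.measurableSet
  have hgmeas : ∀ k, AEMeasurable (g k) (volume.restrict Ω) := by
    intro k
    set q : (Fin n → ℝ) → (Fin n → ℝ) × ℝ × (Fin n → ℝ) :=
      fun x => (x, (w (σ k) x + u (σ k) x, y (σ k) x)) with hqdef
    have hqm : Measurable q :=
      measurable_id.prodMk
        (((hwm _).add (Lp.stronglyMeasurable (u (σ k))).measurable).prodMk (hym _))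
    have hUo : MeasurableSet (Ω ×ˢ (Set.univ : Set (ℝ × (Fin n → ℝ)))) :=
      (hΩo.prod isOpen_univ).measurableSet
    have h1 : AEMeasurable (fun p : (Fin n → ℝ) × ℝ × (Fin n → ℝ) => f p.1 p.2.1 p.2.2)
        (((volume.restrict Ω).map q).restrict (Ω ×ˢ (Set.univ : Set (ℝ × (Fin n → ℝ))))) :=
      hf.aemeasurable hUo
    have h2 : ((volume.restrict Ω).map q).restrict (Ω ×ˢ (Set.univ : Set (ℝ × (Fin n → ℝ)))) = (volume.restrict Ω).map q := by
      apply Measure.restrict_eq_self_of_ae_mem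
      refine (MeasureTheory.ae_map_iff hqm.aemeasurable hUo).mpr ?_
      filter_upwards [ae_restrict_mem hΩmeas] with x hx
      exact ⟨hx, trivial⟩
    rw [h2] at h1
    exact h1.comp_measurable hqm
  have hgb : ∀ k, ∀ᵐ x ∂(volume.restrict Ω), |g k x| ≤ m := by
    intro k
    filter_upwards [ae_restrict_mem hΩmeas] with x hx
    exact hfb x hx _ _
  have hint : ∀ k (a : Lp ℝ 2 (volume.restrict Ω)), Integrable (fun x => g k x * a x) (volume.restrict Ω) := by
    intro k a
    have ham : Integrable (⇑a) (volume.restrict Ω) := (Lp.memLp a).integrable (by norm_num)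
    refine Integrable.mono' (ham.abs.const_mul m)
      ((hgmeas k).aestronglyMeasurable.mul (Lp.aestronglyMeasurable a)) ?_
    filter_upwards [hgb k] with x hx
    rw [Real.norm_eq_abs, abs_mul]
    exact mul_le_mul_of_nonneg_right hx (abs_nonneg _)
  -- bounds for the limit functions
  have hfpb : ∀ x ∈ Ω, |fp x| ≤ m := by
    intro x hx
    have ht : Tendsto (fun s : ℝ => |f x s 0|) atTop (𝓝 |fp x|) :=
      ((hlimp x hx).tendsto_at 0).abs
    exact le_of_tendsto ht (Eventually.of_forall fun s => hfb x hx s 0)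
  have hfmb : ∀ x ∈ Ω, |fm x| ≤ m := by
    intro x hx
    have ht : Tendsto (fun s : ℝ => |f x s 0|) atBot (𝓝 |fm x|) :=
      ((hlimm x hx).tendsto_at 0).abs
    exact le_of_tendsto ht (Eventually.of_forall fun s => hfb x hx s 0)
  -- the g's are in L2 with uniform norm bound
  have hgL2 : ∀ k, MemLp (g k) 2 (volume.restrict Ω) := fun k =>
    MemLp.of_bound (hgmeas k).aestronglyMeasurable m (by
      filter_upwards [hgb k] with x hx; rwa [Real.norm_eq_abs])
  set G : ℕ → Lp ℝ 2 (volume.restrict Ω) := fun k => (hgL2 k).toLp (g k) with hGdef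
  set K : ℝ := (((volume.restrict Ω) Set.univ) ^ (2 : ENNReal).toReal⁻¹ * ENNReal.ofReal m).toReal
    with hKdef
  have hGK : ∀ k, ‖G k‖ ≤ K := by
    intro k
    rw [hGdef]
    simp only
    rw [Lp.norm_toLp]
    refine ENNReal.toReal_mono ?_ (eLpNorm_le_of_ae_bound (by
      filter_upwards [hgb k] with x hx; rwa [Real.norm_eq_abs]))
    exact ENNReal.mul_ne_top
      (ENNReal.rpow_ne_top_of_nonneg (by positivity) (measure_ne_top _ _))
      ENNReal.ofReal_ne_top
  -- the error term tends to zero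
  have hdt : Tendsto (fun k => ‖vv k - vlim‖) atTop (𝓝 0) :=
    tendsto_iff_norm_sub_tendsto_zero.mp hvvtend
  have herr : Tendsto (fun k => ∫ x, g k x * (vv k x - vlim x) ∂(volume.restrict Ω))
      atTop (𝓝 0) := by
    refine squeeze_zero_norm (fun k => ?_) (by simpa using hdt.const_mul K)
    have heq : ∫ x, g k x * (vv k x - vlim x) ∂(volume.restrict Ω)
        = (inner ℝ (G k) (vv k - vlim) : ℝ) := by
      rw [L2.inner_def]
      refine integral_congr_ae ?_
      filter_upwards [(hgL2 k).coeFn_toLp, Lp.coeFn_sub (vv k) vlim] with x h1 h2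
      simp only [h1, h2, Pi.sub_apply, RCLike.inner_apply, conj_trivial]
      rw [mul_comm, ← h1]
    rw [heq]
    calc ‖(inner ℝ (G k) (vv k - vlim) : ℝ)‖ ≤ ‖G k‖ * ‖vv k - vlim‖ :=
          norm_inner_le_norm _ _
      _ ≤ K * ‖vv k - vlim‖ := mul_le_mul_of_nonneg_right (hGK k) (norm_nonneg _)
  -- pointwise identification of vv with a multiple of u
  have hvv_eq : ∀ k, vv k = (c (σ k))⁻¹ • u (σ k) := fun k => rfl
  have hcoeall : ∀ᵐ x ∂(volume.restrict Ω), ∀ k, vv k x = (c (σ k))⁻¹ * u (σ k) x := by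
    rw [ae_all_iff]
    intro k
    rw [hvv_eq k]
    filter_upwards [Lp.coeFn_smul ((c (σ k))⁻¹) (u (σ k))] with x hx
    simpa using hx
  have hwball : ∀ᵐ x ∂(volume.restrict Ω), ∀ k, |w (σ k) x| ≤ M :=
    ae_all_iff.mpr fun k => hwb (σ k)
  have hctop : Tendsto (fun k => c (σ k)) atTop atTop := by
    refine tendsto_atTop_mono (fun k => ?_) tendsto_natCast_atTop_atTop
    calc ((k : ℝ)) ≤ (σ k : ℝ) + 1 := by
          have : (k:ℝ) ≤ (σ k : ℝ) := by exact_mod_cast hσmono.le_apply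
          linarith
      _ ≤ c (σ k) := hcge (σ k)
  -- the limit function
  set S1 : Set (Fin n → ℝ) := {x | 0 < vlim x} with hS1def
  set S2 : Set (Fin n → ℝ) := {x | vlim x < 0} with hS2def
  have hS1m : MeasurableSet S1 :=
    measurableSet_lt measurable_const (Lp.stronglyMeasurable vlim).measurable
  have hS2m : MeasurableSet S2 :=
    measurableSet_lt (Lp.stronglyMeasurable vlim).measurable measurable_const
  set hlimf : (Fin n → ℝ) → ℝ := fun x =>
    S1.indicator (fun x => fp x * vlim x) x + S2.indicator (fun x => fm x * vlim x) x
    with hlimfdef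
  have hvint : Integrable (⇑vlim) (volume.restrict Ω) :=
    (Lp.memLp vlim).integrable (by norm_num)
  -- the main dominated-convergence limit
  have hmain : Tendsto (fun k => ∫ x, g k x * vlim x ∂(volume.restrict Ω)) atTop
      (𝓝 (∫ x, hlimf x ∂(volume.restrict Ω))) := by
    refine tendsto_integral_of_dominated_convergence (fun x => m * |vlim x|)
      (fun k => (hgmeas k).aestronglyMeasurable.mul (Lp.aestronglyMeasurable vlim))
      (hvint.abs.const_mul m)
      (fun k => by
        filter_upwards [hgb k] with x hx
        rw [Real.norm_eq_abs, abs_mul]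
        exact mul_le_mul_of_nonneg_right hx (abs_nonneg _)) ?_
    filter_upwards [ae_restrict_mem hΩmeas, haev, hwball, hcoeall] with x hxΩ hxc hxw hxcoe
    have hxu : ∀ k, u (σ k) x = c (σ k) * vv k x := by
      intro k
      rw [hxcoe k, ← mul_assoc, mul_inv_cancel₀ (hcpos (σ k)).ne', one_mul]
    rcases lt_trichotomy (vlim x) 0 with hv | hv | hv
    · -- vlim x < 0 : use f⁻
      have hubot : Tendsto (fun k => u (σ k) x) atTop atBot := by
        have h1 : Tendsto (fun k => c (σ k) * vv k x) atTop atBot :=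
          hctop.atTop_mul_neg hv hxc
        exact h1.congr fun k => (hxu k).symm
      have hsbot : Tendsto (fun k => w (σ k) x + u (σ k) x) atTop atBot := by
        refine tendsto_atBot_mono (fun k => ?_) (tendsto_atBot_add_const_right _ M hubot)
        have := (abs_le.mp (hxw k)).2
        linarith
      have hgc : Tendsto (fun k => g k x) atTop (𝓝 (fm x)) := by
        rw [Metric.tendsto_nhds]
        intro ε hε
        have hev := Metric.tendstoUniformly_iff.mp (hlimm x hxΩ) ε hε
        filter_upwards [hsbot.eventually hev] with k hk
        have h3 := hk (y (σ k) x)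
        rw [dist_comm] at h3
        exact h3
      have hhx : hlimf x = fm x * vlim x := by
        rw [hlimfdef]
        simp only
        rw [Set.indicator_of_notMem (by simp [hS1def]; linarith),
          Set.indicator_of_mem (by simpa [hS2def] using hv)]
        simp
      rw [hhx]
      exact hgc.mul_const _
    · -- vlim x = 0
      have hhx : hlimf x = 0 := by
        rw [hlimfdef]
        simp only
        rw [Set.indicator_of_notMem (by simp [hS1def, hv]),
          Set.indicator_of_notMem (by simp [hS2def, hv])]
        simp
      rw [hhx, hv]
      simpa using tendsto_const_nhds
    · -- 0 < vlim x : use f⁺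
      have hutop : Tendsto (fun k => u (σ k) x) atTop atTop := by
        have h1 : Tendsto (fun k => c (σ k) * vv k x) atTop atTop :=
          hctop.atTop_mul_pos hv hxc
        exact h1.congr fun k => (hxu k).symm
      have hstop : Tendsto (fun k => w (σ k) x + u (σ k) x) atTop atTop := by
        refine tendsto_atTop_mono (fun k => ?_) (tendsto_atTop_add_const_right _ (-M) hutop)
        have := (abs_le.mp (hxw k)).1
        linarith
      have hgc : Tendsto (fun k => g k x) atTop (𝓝 (fp x)) := by
        rw [Metric.tendsto_nhds]
        intro ε hε
        have hev := Metric.tendstoUniformly_iff.mp (hlimp x hxΩ) ε hε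
        filter_upwards [hstop.eventually hev] with k hk
        have h3 := hk (y (σ k) x)
        rw [dist_comm] at h3
        exact h3
      have hhx : hlimf x = fp x * vlim x := by
        rw [hlimfdef]
        simp only
        rw [Set.indicator_of_mem (by simpa [hS1def] using hv),
          Set.indicator_of_notMem (by simp [hS2def]; linarith)]
        simp
      rw [hhx]
      exact hgc.mul_const _
  -- the integral of the limit function
  have hintS1 : Integrable (S1.indicator fun x => fp x * vlim x) (volume.restrict Ω) := by
    refine (Integrable.mono' (hvint.abs.const_mul m)
      (((hfpc.aemeasurable hΩmeas).aestronglyMeasurable).mul (Lp.aestronglyMeasurable vlim))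
      ?_).indicator hS1m
    filter_upwards [ae_restrict_mem hΩmeas] with x hx
    simp only [Pi.mul_apply, Real.norm_eq_abs, abs_mul]
    exact mul_le_mul_of_nonneg_right (hfpb x hx) (abs_nonneg _)
  have hintS2 : Integrable (S2.indicator fun x => fm x * vlim x) (volume.restrict Ω) := by
    refine (Integrable.mono' (hvint.abs.const_mul m)
      (((hfmc.aemeasurable hΩmeas).aestronglyMeasurable).mul (Lp.aestronglyMeasurable vlim))
      ?_).indicator hS2m
    filter_upwards [ae_restrict_mem hΩmeas] with x hx
    simp only [Pi.mul_apply, Real.norm_eq_abs, abs_mul]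
    exact mul_le_mul_of_nonneg_right (hfmb x hx) (abs_nonneg _)
  have hsum : ∫ x, hlimf x ∂(volume.restrict Ω)
      = (∫ x in S1, fp x * vlim x ∂(volume.restrict Ω))
        + ∫ x in S2, fm x * vlim x ∂(volume.restrict Ω) := by
    rw [hlimfdef]
    simp only
    rw [integral_add hintS1 hintS2, integral_indicator hS1m, integral_indicator hS2m]
  -- each approximate integral is nonnegative
  have hIk : ∀ k, 0 ≤ ∫ x, g k x * vv k x ∂(volume.restrict Ω) := by
    intro k
    have he : ∫ x, g k x * vv k x ∂(volume.restrict Ω)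
        = (c (σ k))⁻¹ * ∫ x, g k x * u (σ k) x ∂(volume.restrict Ω) := by
      rw [← integral_const_mul]
      refine integral_congr_ae ?_
      filter_upwards [hcoeall] with x hx
      rw [hx k]; ring
    rw [he]
    exact mul_nonneg (inv_nonneg.mpr (hcpos _).le) (hupos (σ k))
  -- split the approximate integral
  have hsplit : ∀ k, ∫ x, g k x * vv k x ∂(volume.restrict Ω)
      = (∫ x, g k x * vlim x ∂(volume.restrict Ω))
        + ∫ x, g k x * (vv k x - vlim x) ∂(volume.restrict Ω) := by
    intro k
    have h1 : Integrable (fun x => g k x * vlim x) (volume.restrict Ω) := hint k vlim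
    have h2 : Integrable (fun x => g k x * (vv k x - vlim x)) (volume.restrict Ω) :=
      ((hint k (vv k)).sub h1).congr (Eventually.of_forall fun x => by simp only [Pi.sub_apply]; ring)
    rw [← integral_add h1 h2]
    exact integral_congr_ae (Eventually.of_forall fun x => by ring)
  have hfinal : Tendsto (fun k => ∫ x, g k x * vv k x ∂(volume.restrict Ω)) atTop
      (𝓝 ((∫ x, hlimf x ∂(volume.restrict Ω)) + 0)) := by
    rw [tendsto_congr hsplit]
    exact hmain.add herr
  have h0 : (0:ℝ) ≤ (∫ x, hlimf x ∂(volume.restrict Ω)) + 0 := ge_of_tendsto' hfinal hIk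
  rw [add_zero, hsum] at h0
  have hLL := hLL2 vlim Vl.2 hvlimne
  rw [hS1def, hS2def] at h0
  linarith
end

section
/- Let n ≥ 3, let Ω ⊂ ℝⁿ be a nonempty open bounded set, m > 0, and f : Ω × ℝ × ℝⁿ → ℝ a continuous function with |f(x,s,y)| ≤ m for all (x,s,y). Let f_∞ : Ω → ℝ be a continuous function such that, for every x ∈ Ω, f(x,s,y)·s → f_∞(x) as |s| → +∞, uniformly with respect to y ∈ ℝⁿ. Assume the strong resonance condition (SR1): there exists h ∈ L¹(Ω) with f(x,s,y)·s ≥ h(x) for all (x,s,y) ∈ Ω × ℝ × ℝⁿ, and ∫_Ω f_∞(x) dx > 0. Let X₀ be a finite-dimensional subspace of L²(Ω) such that every nonzero ū ∈ X₀ is nonzero almost everywhere (i.e. the set {x ∈ Ω : ū(x) = 0} has Lebesgue measure zero). Then for every M > 0 there exists R > 0 such that for every measurable w : Ω → ℝ with |w(x)| ≤ M for almost every x ∈ Ω, every measurable y : Ω → ℝⁿ, and every ū ∈ X₀ with ‖ū‖_{L²(Ω)} ≥ R, one has ∫_Ω f(x, w(x) + ū(x), y(x)) · ū(x) dx > 0.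 -/
open MeasureTheory Filter Topology
open scoped ENNReal NNReal
set_option synthInstance.maxHeartbeats 1000000
set_option maxHeartbeats 2000000

lemma aux_tendsto_sup {s : ℕ → ℝ} (h : Tendsto (fun j => |s j|) atTop atTop) :
    Tendsto s atTop (atBot ⊔ atTop) := by
  intro S hS
  rw [Filter.mem_sup] at hS
  obtain ⟨hb, ht⟩ := hS
  obtain ⟨a, ha⟩ := Filter.mem_atBot_sets.1 hb
  obtain ⟨b, hbb⟩ := Filter.mem_atTop_sets.1 ht
  have := h.eventually_ge_atTop (max |a| |b|)
  rw [Filter.mem_map]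
  filter_upwards [this] with j hj
  rcases le_or_gt 0 (s j) with h0 | h0
  · apply hbb
    have : |b| ≤ |s j| := le_trans (le_max_right _ _) hj
    rw [abs_of_nonneg h0] at this
    exact le_trans (le_abs_self b) this
  · apply ha
    have : |a| ≤ |s j| := le_trans (le_max_left _ _) hj
    rw [abs_of_neg h0] at this
    linarith [neg_abs_le a]

/-- Theorem 4.4(i) of the paper: the strong resonance condition (SR1) implies the
geometric condition (G1) for the Niemytzki operator. -/
theorem stmt_7
    {n : ℕ} (hn : 3 ≤ n) (Ω : Set (Fin n → ℝ)) (hΩne : Ω.Nonempty) (hΩo : IsOpen Ω)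
    (hΩb : Bornology.IsBounded Ω)
    (m : ℝ) (hm : 0 < m)
    (f : (Fin n → ℝ) → ℝ → (Fin n → ℝ) → ℝ)
    (hf : ContinuousOn (fun p : (Fin n → ℝ) × ℝ × (Fin n → ℝ) => f p.1 p.2.1 p.2.2)
      (Ω ×ˢ (Set.univ : Set (ℝ × (Fin n → ℝ)))))
    (hfb : ∀ x ∈ Ω, ∀ (s : ℝ) (y : Fin n → ℝ), |f x s y| ≤ m)
    (finf : (Fin n → ℝ) → ℝ) (hfinfc : ContinuousOn finf Ω)
    (hlim : ∀ x ∈ Ω, TendstoUniformly (fun (s : ℝ) (y : Fin n → ℝ) => f x s y * s)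
      (fun _ => finf x) (atBot ⊔ atTop))
    (hSR1 : ∃ h : (Fin n → ℝ) → ℝ, Integrable h (volume.restrict Ω) ∧
      (∀ x ∈ Ω, ∀ (s : ℝ) (y : Fin n → ℝ), h x ≤ f x s y * s) ∧
      0 < ∫ x, finf x ∂(volume.restrict Ω))
    (X₀ : Submodule ℝ (Lp ℝ 2 (volume.restrict Ω))) (hX₀ : FiniteDimensional ℝ X₀)
    (hker : ∀ u : Lp ℝ 2 (volume.restrict Ω), u ∈ X₀ → u ≠ 0 →
      volume {x ∈ Ω | u x = 0} = 0) :
    ∀ M : ℝ, 0 < M → ∃ R : ℝ, 0 < R ∧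
      ∀ w : (Fin n → ℝ) → ℝ, Measurable w →
        (∀ᵐ x ∂(volume.restrict Ω), |w x| ≤ M) →
      ∀ y : (Fin n → ℝ) → (Fin n → ℝ), Measurable y →
      ∀ u : Lp ℝ 2 (volume.restrict Ω), u ∈ X₀ → R ≤ ‖u‖ →
        0 < ∫ x, f x (w x + u x) (y x) * u x ∂(volume.restrict Ω) := by
  obtain ⟨h, hh_int, hh_le, hfinf_pos⟩ := hSR1
  haveI : IsFiniteMeasure (volume.restrict Ω) := by
    constructor
    rw [Measure.restrict_apply_univ]
    exact hΩb.measure_lt_top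
  intro M hM
  by_contra hcon
  push_neg at hcon
  -- extract sequences
  choose w hw hwM y hy u huX hunorm hint using
    fun k : ℕ => hcon ((k : ℝ) + 1) (by positivity)
  -- basic facts
  have humem : ∀ᵐ x ∂(volume.restrict Ω), x ∈ Ω := ae_restrict_mem hΩo.measurableSet
  have hupos : ∀ k, (0 : ℝ) < ‖u k‖ := fun k =>
    lt_of_lt_of_le (by positivity) (hunorm k)
  -- normalized sequence in X₀
  set V : ℕ → X₀ := fun k => (‖u k‖)⁻¹ • (⟨u k, huX k⟩ : X₀) with hV
  have hVnorm : ∀ k, V k ∈ Metric.sphere (0 : X₀) 1 := by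
    intro k
    simp only [hV, mem_sphere_iff_norm, sub_zero, norm_smul, norm_inv, norm_norm]
    have : ‖(⟨u k, huX k⟩ : X₀)‖ = ‖u k‖ := rfl
    rw [this]
    exact inv_mul_cancel₀ (hupos k).ne'
  obtain ⟨v, hv_sphere, φ, hφmono, hφtend⟩ :=
    (isCompact_sphere (0 : X₀) 1).tendsto_subseq hVnorm
  have hvnorm : ‖v‖ = 1 := by simpa using hv_sphere
  have hvne : (v : Lp ℝ 2 (volume.restrict Ω)) ≠ 0 := by
    intro h0
    have : v = 0 := Subtype.ext h0
    rw [this] at hvnorm; simp at hvnorm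
  -- convergence in Lp, then in measure, then a.e. along a subsequence
  haveI : Fact ((1 : ℝ≥0∞) ≤ 2) := ⟨one_le_two⟩
  have hLp_tend : Tendsto (fun j => (↑(V (φ j)) : Lp ℝ 2 (volume.restrict Ω))) atTop (𝓝 (v : Lp ℝ 2 (volume.restrict Ω))) :=
    (continuous_subtype_val.tendsto v).comp hφtend
  obtain ⟨ψ, hψmono, hae_tend⟩ :=
    (tendstoInMeasure_of_tendsto_Lp hLp_tend).exists_seq_tendsto_ae
  set ρ : ℕ → ℕ := fun j => φ (ψ j) with hρ
  have hρmono : StrictMono ρ := hφmono.comp hψmono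
  -- v is nonzero a.e.
  have hv_ne_ae : ∀ᵐ x ∂(volume.restrict Ω), ((v : Lp ℝ 2 (volume.restrict Ω)) : (Fin n → ℝ) → ℝ) x ≠ 0 := by
    have h0 := hker (v : Lp ℝ 2 (volume.restrict Ω)) v.2 hvne
    have hsub : (volume.restrict Ω) {x ∈ Ω | ((v : Lp ℝ 2 (volume.restrict Ω)) : (Fin n → ℝ) → ℝ) x = 0} = 0 := by
      rw [Measure.restrict_apply' hΩo.measurableSet]
      exact measure_mono_null Set.inter_subset_left h0
    have h1 : ∀ᵐ x ∂(volume.restrict Ω), x ∉ {x ∈ Ω | ((v : Lp ℝ 2 (volume.restrict Ω)) : (Fin n → ℝ) → ℝ) x = 0} :=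
      (ae_iff.2 (by simpa using hsub))
    filter_upwards [humem, h1] with x hx h2
    intro h3
    exact h2 ⟨hx, h3⟩
  -- relation between u and V
  have hsmul : ∀ᵐ x ∂(volume.restrict Ω), ∀ k,
      ((V k : X₀) : Lp ℝ 2 (volume.restrict Ω)) x = (‖u k‖)⁻¹ * (u k) x := by
    rw [ae_all_iff]
    intro k
    have : ((V k : X₀) : Lp ℝ 2 (volume.restrict Ω)) = (‖u k‖)⁻¹ • (u k) := rfl
    rw [this]
    filter_upwards [Lp.coeFn_smul ((‖u k‖)⁻¹) (u k)] with x hx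
    simpa using hx
  have hwM' : ∀ᵐ x ∂(volume.restrict Ω), ∀ k, |w k x| ≤ M := ae_all_iff.2 hwM
  -- the integrands
  set G : ℕ → (Fin n → ℝ) → ℝ := fun k x => f x (w k x + (u k) x) (y k x) * (u k) x with hG
  -- pointwise convergence along rho
  have hGtend : ∀ᵐ x ∂(volume.restrict Ω), Tendsto (fun j => G (ρ j) x) atTop (𝓝 (finf x)) := by
    filter_upwards [humem, hv_ne_ae, hae_tend, hsmul, hwM'] with x hxΩ hvx htend hsm hwMx
    -- norms tend to infinity
    have hnorm_tends : Tendsto (fun j => ‖u (ρ j)‖) atTop atTop := by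
      apply tendsto_atTop_mono (fun j => ?_) tendsto_natCast_atTop_atTop
      have h1 : (j : ℝ) ≤ (ρ j : ℝ) := Nat.cast_le.2 hρmono.le_apply
      have h2 := hunorm (ρ j)
      linarith
    have hVx : Tendsto (fun j => (↑(V (ρ j)) : Lp ℝ 2 (volume.restrict Ω)) x) atTop
        (𝓝 (((v : Lp ℝ 2 (volume.restrict Ω)) : (Fin n → ℝ) → ℝ) x)) := htend
    have hux_eq : ∀ j, (u (ρ j)) x = ‖u (ρ j)‖ * (↑(V (ρ j)) : Lp ℝ 2 (volume.restrict Ω)) x := by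
      intro j
      rw [hsm (ρ j), ← mul_assoc, mul_inv_cancel₀ (hupos (ρ j)).ne', one_mul]
    have huabs : Tendsto (fun j => |(u (ρ j)) x|) atTop atTop := by
      have := Tendsto.atTop_mul_pos (abs_pos.2 hvx) hnorm_tends hVx.abs
      apply this.congr
      intro j
      rw [hux_eq j, abs_mul, abs_of_nonneg (norm_nonneg _)]
    set s : ℕ → ℝ := fun j => w (ρ j) x + (u (ρ j)) x with hs_def
    have hs_abs : Tendsto (fun j => |s j|) atTop atTop := by
      apply tendsto_atTop_mono (fun j => ?_) (tendsto_atTop_add_const_right _ (-M) huabs)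
      have h1 : |(u (ρ j)) x| ≤ |s j| + |w (ρ j) x| := by
        have : (u (ρ j)) x = s j - w (ρ j) x := by rw [hs_def]; ring
        rw [this]
        exact abs_sub _ _
      have h2 := hwMx (ρ j)
      linarith
    have hsup : Tendsto s atTop (atBot ⊔ atTop) := aux_tendsto_sup hs_abs
    have hfs : Tendsto (fun j => f x (s j) (y (ρ j) x) * s j) atTop (𝓝 (finf x)) := by
      rw [Metric.tendsto_atTop]
      have hu2 := hlim x hxΩ
      rw [Metric.tendstoUniformly_iff] at hu2
      intro ε hε
      have := hsup.eventually (hu2 ε hε)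
      rw [eventually_atTop] at this
      obtain ⟨N, hN⟩ := this
      exact ⟨N, fun j hj => by rw [dist_comm]; exact hN j hj (y (ρ j) x)⟩
    have hs_ne : ∀ᶠ j in atTop, s j ≠ 0 := by
      filter_upwards [hs_abs.eventually_ge_atTop 1] with j hj
      intro h0
      rw [h0] at hj; simp at hj; linarith
    have hsinv : Tendsto (fun j => (s j)⁻¹) atTop (𝓝 0) := by
      refine squeeze_zero_norm (fun j => ?_) hs_abs.inv_tendsto_atTop
      simp [Real.norm_eq_abs, abs_inv]
    have hf0 : Tendsto (fun j => f x (s j) (y (ρ j) x)) atTop (𝓝 0) := by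
      have h1 := hfs.mul hsinv
      rw [mul_zero] at h1
      apply h1.congr'
      filter_upwards [hs_ne] with j hj
      field_simp
    have hfw : Tendsto (fun j => f x (s j) (y (ρ j) x) * w (ρ j) x) atTop (𝓝 0) := by
      have hg0 : Tendsto (fun j => |f x (s j) (y (ρ j) x)| * M) atTop (𝓝 0) := by
        have := (hf0.abs).mul_const M
        simpa using this
      apply squeeze_zero_norm (fun j => ?_) hg0
      rw [Real.norm_eq_abs, abs_mul]
      exact mul_le_mul_of_nonneg_left (hwMx (ρ j)) (abs_nonneg _)
    have hmain := hfs.sub hfw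
    rw [sub_zero] at hmain
    apply hmain.congr
    intro j
    have hux : s j - w (ρ j) x = (u (ρ j)) x := by
      show w (ρ j) x + (u (ρ j)) x - w (ρ j) x = (u (ρ j)) x
      ring
    simp only [hG]
    rw [← hux]
    have harg : w (ρ j) x + (s j - w (ρ j) x) = s j := by ring
    rw [harg]
    ring
  -- lower bound
  have hGlb : ∀ᵐ x ∂(volume.restrict Ω), ∀ k, h x - m * M ≤ G k x := by
    filter_upwards [humem, hwM'] with x hxΩ hwMx
    intro k
    have h1 : h x ≤ f x (w k x + (u k) x) (y k x) * (w k x + (u k) x) :=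
      hh_le x hxΩ _ _
    have h2 : |f x (w k x + (u k) x) (y k x) * w k x| ≤ m * M := by
      rw [abs_mul]
      exact mul_le_mul (hfb x hxΩ _ _) (hwMx k) (abs_nonneg _) hm.le
    have : G k x = f x (w k x + (u k) x) (y k x) * (w k x + (u k) x)
        - f x (w k x + (u k) x) (y k x) * w k x := by rw [hG]; ring
    rw [this]
    have := abs_le.1 h2
    linarith
  -- integrability and measurability
  have hGmeas : ∀ k, AEStronglyMeasurable (G k) (volume.restrict Ω) := by
    classical
    have hSmeas : MeasurableSet (Ω ×ˢ (Set.univ : Set (ℝ × (Fin n → ℝ)))) :=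
      (hΩo.prod isOpen_univ).measurableSet
    have hFmeas : Measurable ((Ω ×ˢ (Set.univ : Set (ℝ × (Fin n → ℝ)))).piecewise
        (fun p : (Fin n → ℝ) × ℝ × (Fin n → ℝ) => f p.1 p.2.1 p.2.2) 0) :=
      hf.measurable_piecewise continuousOn_const hSmeas
    intro k
    have hp : AEMeasurable (fun x => ((x, (w k x + (u k) x, y k x)) :
        (Fin n → ℝ) × ℝ × (Fin n → ℝ))) (volume.restrict Ω) :=
      aemeasurable_id.prodMk
        ((((hw k).aemeasurable).add (Lp.aestronglyMeasurable (u k)).aemeasurable).prodMk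
          (hy k).aemeasurable)
    have h1 : AEMeasurable (fun x => (Ω ×ˢ (Set.univ : Set (ℝ × (Fin n → ℝ)))).piecewise
        (fun p : (Fin n → ℝ) × ℝ × (Fin n → ℝ) => f p.1 p.2.1 p.2.2) 0
        (x, (w k x + (u k) x, y k x))) (volume.restrict Ω) :=
      hFmeas.comp_aemeasurable hp
    have h2 : AEMeasurable (fun x => f x (w k x + (u k) x) (y k x)) (volume.restrict Ω) := by
      apply h1.congr
      filter_upwards [humem] with x hxΩ
      exact Set.piecewise_eq_of_mem _ _ _ ⟨hxΩ, Set.mem_univ _⟩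
    exact (h2.mul (Lp.aestronglyMeasurable (u k)).aemeasurable).aestronglyMeasurable
  have hu_int : ∀ k, Integrable (fun x => (u k) x) (volume.restrict Ω) :=
    fun k => (Lp.memLp (u k)).integrable one_le_two
  have hGint : ∀ k, Integrable (G k) (volume.restrict Ω) := by
    intro k
    refine Integrable.mono' ((hu_int k).abs.const_mul m) (hGmeas k) ?_
    filter_upwards [humem] with x hxΩ
    rw [hG, Real.norm_eq_abs, abs_mul]
    exact mul_le_mul_of_nonneg_right (hfb x hxΩ _ _) (abs_nonneg _)
  -- finf is integrable
  have hfinf_int : Integrable finf (volume.restrict Ω) := by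
    by_contra hni
    rw [integral_undef hni] at hfinf_pos
    exact lt_irrefl 0 hfinf_pos
  -- the Fatou argument
  set D := ∫ x, (h x - m * M) ∂(volume.restrict Ω) with hD
  have hDint : Integrable (fun x => h x - m * M) (volume.restrict Ω) :=
    hh_int.sub (integrable_const _)
  have hD_le : D ≤ 0 := by
    apply integral_nonpos_of_ae
    filter_upwards [humem] with x hxΩ
    have h1 := hh_le x hxΩ 0 0
    rw [mul_zero] at h1
    have : 0 < m * M := mul_pos hm hM
    show h x - m * M ≤ 0
    linarith
  have hg'int : Integrable (fun x => finf x - (h x - m * M)) (volume.restrict Ω) :=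
    hfinf_int.sub hDint
  have hg'nn : 0 ≤ᵐ[volume.restrict Ω] fun x => finf x - (h x - m * M) := by
    filter_upwards [hGtend, hGlb] with x hx hlb
    have := ge_of_tendsto' (hx.sub_const (h x - m * M))
      (fun j => sub_nonneg.2 (hlb (ρ j)))
    simpa using this
  have hGnn : ∀ j, 0 ≤ᵐ[volume.restrict Ω] fun x => G (ρ j) x - (h x - m * M) := by
    intro j
    filter_upwards [hGlb] with x hlb
    exact sub_nonneg.2 (hlb (ρ j))
  have key : ENNReal.ofReal (∫ x, (finf x - (h x - m * M)) ∂(volume.restrict Ω))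
      ≤ ENNReal.ofReal (-D) := by
    calc ENNReal.ofReal (∫ x, (finf x - (h x - m * M)) ∂(volume.restrict Ω))
        = ∫⁻ x, ENNReal.ofReal (finf x - (h x - m * M)) ∂(volume.restrict Ω) :=
          ofReal_integral_eq_lintegral_ofReal hg'int hg'nn
      _ = ∫⁻ x, liminf (fun j => ENNReal.ofReal (G (ρ j) x - (h x - m * M)))
            atTop ∂(volume.restrict Ω) := by
          apply lintegral_congr_ae
          filter_upwards [hGtend] with x hx
          exact ((ENNReal.tendsto_ofReal (hx.sub_const (h x - m * M))).liminf_eq).symm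
      _ ≤ liminf (fun j => ∫⁻ x, ENNReal.ofReal (G (ρ j) x - (h x - m * M))
            ∂(volume.restrict Ω)) atTop := by
          apply lintegral_liminf_le'
          intro j
          exact ENNReal.measurable_ofReal.comp_aemeasurable
            ((hGint (ρ j)).sub hDint).aemeasurable
      _ = liminf (fun j => ENNReal.ofReal
            (∫ x, (G (ρ j) x - (h x - m * M)) ∂(volume.restrict Ω))) atTop := by
          congr 1
          funext j
          exact (ofReal_integral_eq_lintegral_ofReal ((hGint (ρ j)).sub hDint) (hGnn j)).symm
      _ ≤ liminf (fun _ : ℕ => ENNReal.ofReal (-D)) atTop := by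
          refine liminf_le_liminf (Eventually.of_forall fun j => ?_) (by isBoundedDefault)
            (by isBoundedDefault)
          apply ENNReal.ofReal_le_ofReal
          rw [integral_sub (hGint (ρ j)) hDint]
          have h5 : (∫ a, G (ρ j) a ∂(volume.restrict Ω)) ≤ 0 := hint (ρ j)
          rw [← hD]
          linarith
      _ = ENNReal.ofReal (-D) := liminf_const _
  rw [integral_sub hfinf_int hDint] at key
  have h3 : (∫ x, finf x ∂(volume.restrict Ω)) - D ≤ -D :=
    (ENNReal.ofReal_le_ofReal_iff (by linarith)).1 key
  linarith
end
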